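/- In a tree two-stage process (each outcome m is reachable from at most one intermediate state), for every pay-halfway contract (s, t) there exists a standard contract t' achieving the same expected profit for the principal: define t'_m = t_m + s_{σ(m)}, where σ(m) is the unique predecessor state of outcome m. This contract incentivizes the same final action at every state, the same initial action, and incurs the same expected payment. Hence OPT-Pay = OPT-Standard in tree processes. -/

import Mathlib

/-- Agent's continuation utility at state `s` from final action `j` under outcome transfers `t`. -/
def stateUtil {S M N2 : ℕ} (Ff : Fin S → Fin N2 → Fin M → ℝ)
    (cFin : Fin S → Fin N2 → ℝ) (t : Fin M → ℝ) (s : Fin S) (j : Fin N2) : ℝ :=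
  (∑ m, Ff s j m * t m) - cFin s j

/-- Tree two-stage process: each outcome `m` has the unique predecessor state `σ m`. Given a
pay-halfway contract `(spay, t)` with the agent best responding via final actions `jstar` and
initial action `istar`, the standard contract `t' m = t m + spay (σ m)` incentivizes the same
final action at every state, the same initial action, and incurs the same expected payment. -/
theorem tree_pay_halfway_eq_standard
    (S M N1 N2 : ℕ)
    (F : Fin N1 → Fin S → ℝ) (cInit : Fin N1 → ℝ)
    (Ff : Fin S → Fin N2 → Fin M → ℝ) (cFin : Fin S → Fin N2 → ℝ)
    (hFf0 : ∀ s j m, 0 ≤ Ff s j m) (hFfsum : ∀ s j, ∑ m, Ff s j m = 1)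
    (σ : Fin M → Fin S) (htree : ∀ s j m, 0 < Ff s j m → s = σ m)
    (spay : Fin S → ℝ) (t : Fin M → ℝ)
    (hspay : ∀ s, 0 ≤ spay s) (ht : ∀ m, 0 ≤ t m)
    (jstar : Fin S → Fin N2) (istar : Fin N1)
    (hjstar : ∀ s j, stateUtil Ff cFin t s j ≤ stateUtil Ff cFin t s (jstar s))
    (histar : ∀ i,
      (∑ s, F i s * (stateUtil Ff cFin t s (jstar s) + spay s)) - cInit i ≤
      (∑ s, F istar s * (stateUtil Ff cFin t s (jstar s) + spay s)) - cInit istar) :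
    -- the standard contract t' m = t m + spay (σ m):
    (∀ s j, stateUtil Ff cFin (fun m => t m + spay (σ m)) s j ≤
      stateUtil Ff cFin (fun m => t m + spay (σ m)) s (jstar s)) ∧
    (∀ i,
      (∑ s, F i s * stateUtil Ff cFin (fun m => t m + spay (σ m)) s (jstar s)) - cInit i ≤
      (∑ s, F istar s * stateUtil Ff cFin (fun m => t m + spay (σ m)) s (jstar s))
        - cInit istar) ∧
    (∑ s, F istar s * (spay s + ∑ m, Ff s (jstar s) m * t m)) =
      (∑ s, F istar s * ∑ m, Ff s (jstar s) m * (t m + spay (σ m))) := by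
  have key : ∀ s j, ∑ m, Ff s j m * spay (σ m) = spay s := by
    intro s j
    have : ∀ m ∈ Finset.univ, Ff s j m * spay (σ m) = Ff s j m * spay s := by
      intro m _
      rcases lt_or_eq_of_le (hFf0 s j m) with h | h
      · rw [← htree s j m h]
      · rw [← h]; ring
    rw [Finset.sum_congr rfl this, ← Finset.sum_mul, hFfsum, one_mul]
  have hU : ∀ s j, stateUtil Ff cFin (fun m => t m + spay (σ m)) s j
      = stateUtil Ff cFin t s j + spay s := by
    intro s j
    simp only [stateUtil, mul_add, Finset.sum_add_distrib, key s j]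
    ring
  refine ⟨fun s j => ?_, fun i => ?_, ?_⟩
  · rw [hU, hU]
    exact add_le_add_left (hjstar s j) _
  · simp only [hU]
    exact histar i
  · apply Finset.sum_congr rfl
    intro s _
    congr 1
    simp only [mul_add, Finset.sum_add_distrib, key s (jstar s)]
    ring
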